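/- Let r ≤ γn/1000 and suppose a computation path produces exactly ⌊γn/r⌋ edge-disjoint pieces each containing exactly r correct outputs (discarding a final shorter piece). Then the number of pieces exceeds (999/1000)·γn/r, and if the total path length is T and total number of outputs is at most βn, then there exists a piece of length at most ⌈n/20⌉ that produces at least r correct outputs and at most ⌊(22/21)·rβ/γ⌋ outputs overall, provided r ≤ γn²/(20000·T). -/

import Mathlib

private lemma list_len_mul_le_sum (l : List ℕ) (a : ℕ) (h : ∀ x ∈ l, a ≤ x) :
    l.length * a ≤ l.sum := by
  induction l with
  | nil => simp
  | cons x t ih =>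
    simp only [List.length_cons, List.sum_cons]
    have hx := h x (by simp)
    have ht := ih (fun y hy => h y (by simp [hy]))
    nlinarith

/-- The "dense piece" claim.  A computation path is modeled as a list of edges,
each annotated with the number of outputs it produces (first component) and
the number of correct outputs among them (second component).  Here `g` plays
the role of `γn` and `b` of `βn`.  If the path is cut into `⌊g/r⌋` consecutive
pieces each producing exactly `r` correct outputs (plus a discarded leftover),
with `r ≤ g/1000`, then the number of pieces exceeds `(999/1000)·g/r`; and if
moreover the path has length at most `T`, produces at most `b` outputs in
total, and `r ≤ g·n/(20000·T)`, then some piece has length at most `⌈n/20⌉`,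
produces at least `r` correct outputs, and produces at most
`⌊(22/21)·r·b/g⌋` outputs overall. -/
theorem stmt16 (n g b T r : ℕ) (hn : 0 < n) (hr : 0 < r)
    (hrg : 1000 * r ≤ g)
    (path rest : List (ℕ × ℕ)) (ps : List (List (ℕ × ℕ)))
    (hpath : path = ps.flatten ++ rest)
    (hedge : ∀ e ∈ path, e.2 ≤ e.1)
    (hpieces : ∀ P ∈ ps, (P.map Prod.snd).sum = r)
    (hnum : ps.length = g / r)
    (hT : path.length ≤ T)
    (hout : (path.map Prod.fst).sum ≤ b)
    (hrT : 20000 * r * T ≤ g * n) :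
    999 * g < 1000 * ps.length * r ∧
    ∃ P ∈ ps, P.length ≤ (n + 19) / 20 ∧ r ≤ (P.map Prod.snd).sum ∧
      21 * g * (P.map Prod.fst).sum ≤ 22 * r * b := by
  have h1 : 999 * g < 1000 * ps.length * r := by
    rw [hnum]
    have hdm : r * (g / r) + g % r = g := Nat.div_add_mod g r
    have hmod : g % r < r := Nat.mod_lt g hr
    nlinarith [hdm, hmod, hrg]
  refine ⟨h1, ?_⟩
  by_contra hcon
  push_neg at hcon
  set c := (n + 19) / 20 with hc
  -- the two filtered sublists
  set ps₁ := ps.filter (fun P => decide (c < P.length)) with hps₁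
  set ps₂ := ps.filter (fun P => !decide (c < P.length)) with hps₂
  set L := ps₁.length with hL
  set H := ps₂.length with hH
  have hm : ps.length = L + H := List.length_eq_length_filter_add _
  -- total length bound
  have hlensum : (ps.map List.length).sum ≤ T := by
    have h2 : (ps.map List.length).sum = ps.flatten.length := List.length_flatten.symm
    have : path.length = ps.flatten.length + rest.length := by rw [hpath]; simp
    omega
  -- total output bound
  have houtsum : (ps.map (fun P => (P.map Prod.fst).sum)).sum ≤ b := by
    have h2 : (path.map Prod.fst).sum
        = (ps.map (fun P => (P.map Prod.fst).sum)).sum + (rest.map Prod.fst).sum := by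
      rw [hpath]
      simp [List.map_flatten, List.sum_flatten, Function.comp_def]
    omega
  -- long pieces bound : 1000 * r * L ≤ g
  have hLsum : L * (c + 1) ≤ T := by
    have h3 : (ps₁.map List.length).sum ≤ (ps.map List.length).sum :=
      List.Sublist.sum_le_sum ((List.filter_sublist (l := ps)).map _) (fun a _ => Nat.zero_le a)
    have h4 : L * (c + 1) ≤ (ps₁.map List.length).sum := by
      have := list_len_mul_le_sum (ps₁.map List.length) (c + 1) ?_
      · simpa using this
      · intro x hx
        obtain ⟨P, hP, rfl⟩ := List.mem_map.1 hx
        have := List.of_mem_filter hP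
        simp at this
        omega
    omega
  have hLbound : 1000 * r * L ≤ g := by
    have hcn : n ≤ 20 * c := by
      have hdm : 20 * ((n + 19) / 20) + (n + 19) % 20 = n + 19 := Nat.div_add_mod _ 20
      have : (n + 19) % 20 < 20 := Nat.mod_lt _ (by norm_num)
      omega
    have h5 : L * n ≤ 20 * T := by
      calc L * n ≤ L * (20 * (c + 1)) := Nat.mul_le_mul_left L (by omega)
        _ = 20 * (L * (c + 1)) := by ring
        _ ≤ 20 * T := Nat.mul_le_mul_left 20 hLsum
    have h6 : (1000 * r * L) * n ≤ g * n := by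
      calc (1000 * r * L) * n = 1000 * r * (L * n) := by ring
        _ ≤ 1000 * r * (20 * T) := Nat.mul_le_mul_left _ h5
        _ = 20000 * r * T := by ring
        _ ≤ g * n := hrT
    exact Nat.le_of_mul_le_mul_right h6 hn
  -- heavy pieces bound : 22 * r * H ≤ 21 * g
  have hheavy : ∀ P ∈ ps₂, 22 * r * b + 1 ≤ 21 * g * (P.map Prod.fst).sum := by
    intro P hP
    have hmem : P ∈ ps := List.mem_of_mem_filter hP
    have hshort := List.of_mem_filter hP
    simp at hshort
    have := hcon P hmem (by omega) (by rw [hpieces P hmem])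
    omega
  have hHsum : H * (22 * r * b + 1) ≤ 21 * g * (ps₂.map (fun P => (P.map Prod.fst).sum)).sum := by
    have := list_len_mul_le_sum (ps₂.map (fun P => 21 * g * (P.map Prod.fst).sum))
      (22 * r * b + 1) ?_
    · have heq : (ps₂.map (fun P => 21 * g * (P.map Prod.fst).sum)).sum
          = 21 * g * (ps₂.map (fun P => (P.map Prod.fst).sum)).sum := by
        rw [← List.sum_map_mul_left]
      rw [heq] at this
      simpa using this
    · intro x hx
      obtain ⟨P, hP, rfl⟩ := List.mem_map.1 hx
      exact hheavy P hP
  have hHout : (ps₂.map (fun P => (P.map Prod.fst).sum)).sum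
      ≤ (ps.map (fun P => (P.map Prod.fst).sum)).sum :=
    List.Sublist.sum_le_sum ((List.filter_sublist (l := ps)).map _) (fun a _ => Nat.zero_le a)
  have hHb : H * (22 * r * b + 1) ≤ 21 * g * b :=
    hHsum.trans (Nat.mul_le_mul_left _ (hHout.trans houtsum))
  have hHbound : 22 * r * H ≤ 21 * g := by
    rcases Nat.eq_zero_or_pos b with hb | hb
    · subst hb
      simp at hHb
      simp [hHb]
    · have h7 : (22 * r * H) * b ≤ (21 * g) * b := by
        calc (22 * r * H) * b = H * (22 * r * b) := by ring
          _ ≤ H * (22 * r * b + 1) := Nat.mul_le_mul_left H (by omega)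
          _ ≤ 21 * g * b := hHb
      exact Nat.le_of_mul_le_mul_right h7 hb
  -- final contradiction
  have hmr : ps.length * r = L * r + H * r := by rw [hm]; ring
  nlinarith [h1, hmr, hLbound, hHbound]
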